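/- For the formal group law of height n Morava E-theory (or any formal group law over a p-torsion-free complete local domain R whose p-series [p](x) = px + … has the property that R[[x]]/[p](x) is free of rank p^n), the cokernel of the map R[[x]]/[p](x) → R × R[[x]]/⟨p⟩(x), x ↦ (0, x), is annihilated by p. -/

import Mathlib

open PowerSeries

/-- Let `R` be a `p`-torsion-free complete local Noetherian
domain carrying a formal group law whose `p`-series `[p](x) = px + …` is such
that `R⟦x⟧/[p](x)` is free of rank `p^n`.  Write `[p](x) = x·⟨p⟩(x)` where
`⟨p⟩(x) = p + f(x)` with `x ∣ f(x)` (equivalently, `⟨p⟩(x)` has constant term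
`p`).  Then the cokernel of the map
`R⟦x⟧/[p](x) → R × R⟦x⟧/⟨p⟩(x)`, `g(x) ↦ (g(0), g(x) mod ⟨p⟩(x))` (so `x ↦ (0,x)`),
is annihilated by `p`. -/
theorem coker_height_one_decomposition_killed_by_p {R : Type*} [CommRing R]
    [IsDomain R] [IsLocalRing R] [IsNoetherianRing R]
    [IsAdicComplete (IsLocalRing.maximalIdeal R) R]
    (p : ℕ) [Fact p.Prime] (n : ℕ)
    (hptf : ∀ r : R, (p : R) * r = 0 → r = 0)
    (pSer1 b : PowerSeries R)
    (hfac : pSer1 = PowerSeries.X * b)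
    (hb : PowerSeries.constantCoeff b = (p : R))
    (hfree : Module.Free R (PowerSeries R ⧸ Ideal.span {pSer1}))
    (hrank : Module.finrank R (PowerSeries R ⧸ Ideal.span {pSer1}) = p ^ n)
    (φ : (PowerSeries R ⧸ Ideal.span {pSer1}) →+*
        R × (PowerSeries R ⧸ Ideal.span {b}))
    (hφ : ∀ g : PowerSeries R,
      φ (Ideal.Quotient.mk (Ideal.span {pSer1}) g) =
        (PowerSeries.constantCoeff g, Ideal.Quotient.mk (Ideal.span {b}) g)) :
    ∀ y : R × (PowerSeries R ⧸ Ideal.span {b}), p • y ∈ Set.range φ := by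
  rintro ⟨r, q⟩
  obtain ⟨qt, rfl⟩ := Ideal.Quotient.mk_surjective q
  refine ⟨Ideal.Quotient.mk _ ((p : PowerSeries R) * qt + PowerSeries.C (r - PowerSeries.constantCoeff qt) * b), ?_⟩
  rw [hφ]
  have h1 : Ideal.Quotient.mk (Ideal.span {b})
      ((p : PowerSeries R) * qt + PowerSeries.C (r - PowerSeries.constantCoeff qt) * b)
      = Ideal.Quotient.mk (Ideal.span {b}) ((p : PowerSeries R) * qt) := by
    rw [RingHom.map_add]
    have : Ideal.Quotient.mk (Ideal.span {b}) (PowerSeries.C (r - PowerSeries.constantCoeff qt) * b) = 0 := by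
      rw [Ideal.Quotient.eq_zero_iff_mem]
      exact Ideal.mul_mem_left _ _ (Ideal.subset_span rfl)
    rw [this, add_zero]
  rw [h1]
  ext
  · simp [hb]
    ring
  · simp [Prod.smul_def]
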